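/- The generating function counting ℓ-cores by their largest part satisfies ∑_{λ an ℓ-core} x^{λ_1} = 1/(1-x)^{ℓ-1} as formal power series. -/

import Mathlib

/-- The hook length of the box `(a, b)` (0-indexed row `a`, column `b`)
of the Young diagram `μ`: the number of boxes to the right in its row,
plus the number of boxes below in its column, plus one. -/
def hookLen (μ : YoungDiagram) (a b : ℕ) : ℕ :=
  μ.rowLen a + μ.colLen b - a - b - 1

/-- A partition (Young diagram) is an `ℓ`-core when no box has hook length
divisible by `ℓ`. -/
def IsCore (ℓ : ℕ) (μ : YoungDiagram) : Prop :=
  ∀ a b : ℕ, (a, b) ∈ μ → ¬ ℓ ∣ hookLen μ a b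

namespace CoreProof

open Finset

/-- First-row hook lengths. -/
def h0 (μ : YoungDiagram) (b : ℕ) : ℕ := hookLen μ 0 b

/-- The complement enumeration. -/
def gam (μ : YoungDiagram) (a : ℕ) : ℕ := μ.rowLen 0 + a - μ.rowLen a

/-- The set of first-row hook lengths. -/
def hset (μ : YoungDiagram) : Finset ℕ := (Finset.range (μ.rowLen 0)).image (h0 μ)

lemma gam_add (μ : YoungDiagram) (a : ℕ) : gam μ a + μ.rowLen a = μ.rowLen 0 + a := by
  have h := μ.rowLen_anti 0 a (Nat.zero_le a)
  unfold gam; omega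

lemma mem_sum {μ : YoungDiagram} {a b : ℕ} (h : (a, b) ∈ μ) :
    a + b + 2 ≤ μ.rowLen a + μ.colLen b := by
  have h1 := YoungDiagram.mem_iff_lt_rowLen.mp h
  have h2 := YoungDiagram.mem_iff_lt_colLen.mp h
  omega

lemma notmem_sum {μ : YoungDiagram} {a b : ℕ} (h : (a, b) ∉ μ) :
    μ.rowLen a + μ.colLen b ≤ a + b := by
  have h1 : ¬ b < μ.rowLen a := fun hh => h (YoungDiagram.mem_iff_lt_rowLen.mpr hh)
  have h2 : ¬ a < μ.colLen b := fun hh => h (YoungDiagram.mem_iff_lt_colLen.mpr hh)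
  omega

lemma hook_add {μ : YoungDiagram} {a b : ℕ} (h : (a, b) ∈ μ) :
    hookLen μ a b + (a + b + 1) = μ.rowLen a + μ.colLen b := by
  have := mem_sum h; unfold hookLen; omega

lemma hook_pos {μ : YoungDiagram} {a b : ℕ} (h : (a, b) ∈ μ) : 1 ≤ hookLen μ a b := by
  have h1 := mem_sum h; have h2 := hook_add h; omega

lemma h0_add {μ : YoungDiagram} {b : ℕ} (hb : b < μ.rowLen 0) :
    h0 μ b + (b + 1) = μ.rowLen 0 + μ.colLen b := by
  have h : ((0 : ℕ), b) ∈ μ := YoungDiagram.mem_iff_lt_rowLen.mpr hb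
  have := hook_add h
  unfold h0; omega

lemma key_add {μ : YoungDiagram} {a b : ℕ} (h : (a, b) ∈ μ) :
    hookLen μ a b + gam μ a = h0 μ b := by
  have hb : b < μ.rowLen 0 :=
    lt_of_lt_of_le (YoungDiagram.mem_iff_lt_rowLen.mp h) (μ.rowLen_anti 0 a (Nat.zero_le a))
  have h1 := hook_add h
  have h2 := h0_add hb
  have h3 := gam_add μ a
  omega

lemma mem_iff_gam_lt {μ : YoungDiagram} {a b : ℕ} (hb : b < μ.rowLen 0) :
    (a, b) ∈ μ ↔ gam μ a < h0 μ b := by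
  constructor
  · intro h
    have h1 := key_add h
    have h2 := hook_pos h
    omega
  · intro hlt
    by_contra h
    have h1 := notmem_sum h
    have h2 := h0_add hb
    have h3 := gam_add μ a
    omega

lemma gam_ne_h0 {μ : YoungDiagram} {a b : ℕ} (hb : b < μ.rowLen 0) :
    gam μ a ≠ h0 μ b := by
  intro heq
  by_cases h : (a, b) ∈ μ
  · have h1 := key_add h
    have h2 := hook_pos h
    omega
  · have h1 := notmem_sum h
    have h2 := h0_add hb
    have h3 := gam_add μ a
    omega

lemma gam_lt_succ (μ : YoungDiagram) (a : ℕ) : gam μ a < gam μ (a + 1) := by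
  have h1 := gam_add μ a
  have h2 := gam_add μ (a + 1)
  have h3 := μ.rowLen_anti a (a + 1) (by omega)
  omega

lemma gam_strictMono (μ : YoungDiagram) : StrictMono (gam μ) :=
  strictMono_nat_of_lt_succ (gam_lt_succ μ)

lemma gam_zero (μ : YoungDiagram) : gam μ 0 = 0 := by
  unfold gam; omega

lemma le_gam (μ : YoungDiagram) (a : ℕ) : a ≤ gam μ a := by
  have h1 := gam_add μ a
  have h3 := μ.rowLen_anti 0 a (Nat.zero_le a)
  omega

lemma mem_hset {μ : YoungDiagram} {x : ℕ} :
    x ∈ hset μ ↔ ∃ b, b < μ.rowLen 0 ∧ h0 μ b = x := by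
  simp [hset]

lemma mem_hset_of_between {μ : YoungDiagram} {a x : ℕ}
    (h1 : gam μ a < x) (h2 : x < gam μ (a + 1)) : x ∈ hset μ := by
  have hga := gam_add μ a
  have hga1 := gam_add μ (a + 1)
  have hanti := μ.rowLen_anti a (a + 1) (by omega)
  set d := x - gam μ a with hd
  set b := μ.rowLen a - d with hb
  have hra : 1 ≤ d ∧ d ≤ μ.rowLen a := by omega
  have hmem : (a, b) ∈ μ := YoungDiagram.mem_iff_lt_rowLen.mpr (by omega)
  have hnot : (a + 1, b) ∉ μ := fun h => by
    have := YoungDiagram.mem_iff_lt_rowLen.mp h; omega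
  have hcol : μ.colLen b = a + 1 := by
    have hm := YoungDiagram.mem_iff_lt_colLen.mp hmem
    have hn : ¬ (a + 1) < μ.colLen b := fun h => hnot (YoungDiagram.mem_iff_lt_colLen.mpr h)
    omega
  have hbr0 : b < μ.rowLen 0 :=
    lt_of_lt_of_le (by omega : b < μ.rowLen a) (μ.rowLen_anti 0 a (Nat.zero_le a))
  have h0a := h0_add hbr0
  exact mem_hset.mpr ⟨b, hbr0, by omega⟩

lemma mem_hset_or_gam (μ : YoungDiagram) (x : ℕ) :
    x ∈ hset μ ∨ ∃ a, gam μ a = x := by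
  by_cases h0x : ∃ a, gam μ a = x
  · exact Or.inr h0x
  push_neg at h0x
  left
  have hx0 : 0 < x := by
    rcases Nat.eq_zero_or_pos x with h | h
    · exact absurd (h ▸ gam_zero μ) (h0x 0)
    · exact h
  set a := Nat.findGreatest (fun a => gam μ a < x) x with ha
  have hspec : gam μ a < x := by
    have := Nat.findGreatest_spec (P := fun y => gam μ y < x) (m := 0) (Nat.zero_le x)
      (by simpa [gam_zero μ] using hx0)
    rw [← ha] at this
    exact this
  have hnext : x < gam μ (a + 1) := by
    rcases le_or_gt (a + 1) x with h | h
    · have h1 : ¬ gam μ (a + 1) < x := by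
        have := Nat.findGreatest_is_greatest (P := fun y => gam μ y < x) (k := a + 1)
          (by rw [ha]; omega) h
        simpa using this
      have h2 := h0x (a + 1)
      omega
    · have h1 : a ≤ x := by rw [ha]; exact Nat.findGreatest_le x
      have h2 := le_gam μ a
      omega
  exact mem_hset_of_between hspec hnext

lemma zero_not_mem_hset (μ : YoungDiagram) : 0 ∉ hset μ := by
  intro h
  rcases mem_hset.mp h with ⟨b, hb, he⟩
  have := hook_pos (YoungDiagram.mem_iff_lt_rowLen.mpr hb : ((0 : ℕ), b) ∈ μ)
  unfold h0 at he; omega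

lemma gam_not_mem_hset (μ : YoungDiagram) (a : ℕ) : gam μ a ∉ hset μ := by
  intro h
  rcases mem_hset.mp h with ⟨b, hb, he⟩
  exact gam_ne_h0 hb he.symm

lemma gam_char (μ : YoungDiagram) (x : ℕ) : (∃ a, gam μ a = x) ↔ x ∉ hset μ := by
  constructor
  · rintro ⟨a, rfl⟩; exact gam_not_mem_hset μ a
  · intro hx
    rcases mem_hset_or_gam μ x with h | h
    · exact absurd h hx
    · exact h

/-- A finite set of naturals is closed under subtracting `ℓ`. -/
def Closed (ℓ : ℕ) (S : Finset ℕ) : Prop := ∀ x ∈ S, ℓ ≤ x → x - ℓ ∈ S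

lemma closed_iterate {ℓ : ℕ} {S : Finset ℕ} (hS : Closed ℓ S) :
    ∀ j x, x ∈ S → ℓ * j ≤ x → x - ℓ * j ∈ S := by
  intro j
  induction j with
  | zero => intro x hx _; simpa using hx
  | succ j ih =>
    intro x hx hle
    rw [Nat.mul_succ] at hle ⊢
    have h1 : x - ℓ * j ∈ S := ih x hx (by omega)
    have h2 := hS _ h1 (by omega)
    rwa [Nat.sub_sub] at h2

lemma isCore_iff_closed {ℓ : ℕ} (hℓ : 1 ≤ ℓ) (μ : YoungDiagram) :
    IsCore ℓ μ ↔ Closed ℓ (hset μ) := by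
  constructor
  · intro hc x hx hlx
    rcases mem_hset.mp hx with ⟨b, hb, he⟩
    by_contra hxl
    rcases mem_hset_or_gam μ (x - ℓ) with h | ⟨a, ha⟩
    · exact hxl h
    · have hmem : (a, b) ∈ μ := (mem_iff_gam_lt hb).mpr (by omega)
      have hk := key_add hmem
      have hh : hookLen μ a b = ℓ := by omega
      exact hc a b hmem (hh ▸ dvd_refl ℓ)
  · intro hcl a b hmem hdvd
    rcases hdvd with ⟨c, hc⟩
    have hpos := hook_pos hmem
    have hb : b < μ.rowLen 0 :=
      lt_of_lt_of_le (YoungDiagram.mem_iff_lt_rowLen.mp hmem) (μ.rowLen_anti 0 a (Nat.zero_le a))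
    have hh0 : h0 μ b ∈ hset μ := mem_hset.mpr ⟨b, hb, rfl⟩
    have hkey := key_add hmem
    have hmemS : h0 μ b - ℓ * c ∈ hset μ := closed_iterate hcl c _ hh0 (by omega)
    have heq : h0 μ b - ℓ * c = gam μ a := by omega
    exact gam_not_mem_hset μ a (heq ▸ hmemS)

lemma h0_strictAnti {μ : YoungDiagram} {b b' : ℕ} (h : b < b') (hb' : b' < μ.rowLen 0) :
    h0 μ b' < h0 μ b := by
  have h1 := h0_add (lt_trans h hb')
  have h2 := h0_add hb'
  have h3 := μ.colLen_anti b b' (le_of_lt h)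
  omega

lemma card_hset (μ : YoungDiagram) : (hset μ).card = μ.rowLen 0 := by
  rw [hset, Finset.card_image_of_injOn, Finset.card_range]
  intro b hb b' hb' he
  simp only [Finset.coe_range, Set.mem_Iio] at hb hb'
  by_contra hne
  rcases Nat.lt_or_ge b b' with h | h
  · have := h0_strictAnti h hb'; omega
  · have hlt : b' < b := by omega
    have := h0_strictAnti hlt hb; omega

lemma hset_injective : Function.Injective hset := by
  intro μ ν h
  have hr0 : μ.rowLen 0 = ν.rowLen 0 := by
    rw [← card_hset, ← card_hset, h]
  have hgam : gam μ = gam ν := by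
    refine ((gam_strictMono μ).range_inj (gam_strictMono ν)).mp ?_
    ext x
    simp only [Set.mem_range]
    rw [gam_char, gam_char, h]
  have hrow : ∀ a, μ.rowLen a = ν.rowLen a := by
    intro a
    have h1 := gam_add μ a
    have h2 := gam_add ν a
    have h3 : gam μ a = gam ν a := congrFun hgam a
    omega
  ext ⟨a, b⟩
  rw [YoungDiagram.mem_cells, YoungDiagram.mem_cells, YoungDiagram.mem_iff_lt_rowLen,
    YoungDiagram.mem_iff_lt_rowLen, hrow]

/-! ### Constructing a diagram from a closed set -/

section Construct

variable (S : Finset ℕ)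

lemma infS : {x | x ∉ S}.Infinite := by
  have : {x | x ∉ S} = (↑S : Set ℕ)ᶜ := rfl
  rw [this]
  exact (S.finite_toSet).infinite_compl

/-- Enumeration of the complement of `S`. -/
noncomputable def gS (a : ℕ) : ℕ := Nat.nth (· ∉ S) a

lemma gS_strictMono : StrictMono (gS S) := Nat.nth_strictMono (infS S)

lemma gS_zero (h : 0 ∉ S) : gS S 0 = 0 := Nat.nth_zero_of_zero h

lemma gS_not_mem (a : ℕ) : gS S a ∉ S := Nat.nth_mem_of_infinite (infS S) a

lemma gS_range (x : ℕ) : (∃ a, gS S a = x) ↔ x ∉ S := by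
  constructor
  · rintro ⟨a, rfl⟩; exact gS_not_mem S a
  · intro hx
    have := Nat.range_nth_of_infinite (p := (· ∉ S)) (infS S)
    have hx' : x ∈ Set.range (Nat.nth (· ∉ S)) := by rw [this]; exact hx
    exact hx'

lemma count_ge (m : ℕ) : m - S.card ≤ Nat.count (· ∉ S) m := by
  rw [Nat.count_eq_card_filter_range]
  have hsub : Finset.range m ⊆
      ((Finset.range m).filter (fun x => x ∉ S)) ∪ ((Finset.range m).filter (fun x => x ∈ S)) := by
    intro x hx
    rw [Finset.mem_union, Finset.mem_filter, Finset.mem_filter]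
    by_cases h : x ∈ S
    · exact Or.inr ⟨hx, h⟩
    · exact Or.inl ⟨hx, h⟩
  have h1 := (Finset.card_le_card hsub).trans (Finset.card_union_le _ _)
  have h2 : ((Finset.range m).filter (fun x => x ∈ S)).card ≤ S.card := by
    apply Finset.card_le_card
    intro x hx
    exact (Finset.mem_filter.mp hx).2
  have h3 : (Finset.range m).card = m := Finset.card_range m
  omega

lemma gS_le (a : ℕ) : gS S a ≤ a + S.card := by
  have h1 := Nat.count_nth_of_infinite (p := (· ∉ S)) (infS S) a
  have h2 := count_ge S (gS S a)
  unfold gS at h2 ⊢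
  omega

lemma a_le_gS (a : ℕ) : a ≤ gS S a := (gS_strictMono S).le_apply

/-- Row lengths of the diagram to be built. -/
noncomputable def rS (a : ℕ) : ℕ := S.card + a - gS S a

lemma rS_zero (h : 0 ∉ S) : rS S 0 = S.card := by
  unfold rS
  rw [gS_zero S h]
  omega

lemma rS_le (a : ℕ) : rS S a ≤ S.card := by
  have := a_le_gS S a
  unfold rS; omega

lemma rS_add (a : ℕ) : rS S a + gS S a = S.card + a := by
  have := gS_le S a
  unfold rS; omega

lemma rS_anti : Antitone (rS S) := by
  apply antitone_nat_of_succ_le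
  intro a
  have h1 := rS_add S a
  have h2 := rS_add S (a + 1)
  have h3 := gS_strictMono S (by omega : a < a + 1)
  omega

lemma rS_eventually_zero (a : ℕ) (ha : S.sup id + 1 ≤ a) : rS S a = 0 := by
  classical
  set m := a + S.card with hm
  have hmS : m ∉ S := by
    intro h
    have := Finset.le_sup (f := id) h
    simp only [id] at this
    omega
  have hcount : Nat.count (· ∉ S) m = a := by
    rw [Nat.count_eq_card_filter_range]
    have hsub : S ⊆ Finset.range m := by
      intro x hx
      have := Finset.le_sup (f := id) hx
      simp only [id] at this
      rw [Finset.mem_range]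
      omega
    have h1 : (Finset.range m).filter (fun x => x ∉ S) = Finset.range m \ S := by
      ext x
      simp only [Finset.mem_filter, Finset.mem_sdiff]
    rw [h1, Finset.card_sdiff_of_subset hsub, Finset.card_range]
    omega
  have : gS S a = m := by
    unfold gS
    rw [← hcount]
    exact Nat.nth_count hmS
  unfold rS
  omega

/-- The cells of the diagram built from `S`. -/
noncomputable def cellsS : Finset (ℕ × ℕ) :=
  (Finset.range (S.sup id + 1) ×ˢ Finset.range S.card).filter fun p => p.2 < rS S p.1

lemma mem_cellsS (p : ℕ × ℕ) : p ∈ cellsS S ↔ p.2 < rS S p.1 := by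
  unfold cellsS
  simp only [Finset.mem_filter, Finset.mem_product, Finset.mem_range]
  constructor
  · exact fun h => h.2
  · intro h
    refine ⟨⟨?_, lt_of_lt_of_le h (rS_le S p.1)⟩, h⟩
    by_contra hc
    have : rS S p.1 = 0 := by
      have h1 := rS_eventually_zero S p.1 (by omega)
      exact h1
    omega

/-- The Young diagram built from `S`. -/
noncomputable def muS : YoungDiagram where
  cells := cellsS S
  isLowerSet := by
    rintro ⟨a, b⟩ ⟨a', b'⟩ hle hmem
    rw [Finset.mem_coe, mem_cellsS] at hmem ⊢
    obtain ⟨h1, h2⟩ := hle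
    simp only at h1 h2 hmem ⊢
    have := rS_anti S h1
    omega

lemma mem_muS (a b : ℕ) : (a, b) ∈ muS S ↔ b < rS S a := by
  rw [← YoungDiagram.mem_cells]
  exact mem_cellsS S (a, b)

lemma rowLen_muS (a : ℕ) : (muS S).rowLen a = rS S a := by
  have h1 := (mem_muS S a (rS S a)).symm.trans YoungDiagram.mem_iff_lt_rowLen
  have h2 := (mem_muS S a ((muS S).rowLen a)).symm.trans YoungDiagram.mem_iff_lt_rowLen
  omega

lemma gam_muS (h : 0 ∉ S) (a : ℕ) : gam (muS S) a = gS S a := by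
  have h1 := gam_add (muS S) a
  rw [rowLen_muS, rowLen_muS, rS_zero S h] at h1
  have h2 := rS_add S a
  omega

lemma hset_muS (h : 0 ∉ S) : hset (muS S) = S := by
  ext x
  have h2 := gam_char (muS S) x
  have hgam : (∃ a, gam (muS S) a = x) ↔ x ∉ S := by
    constructor
    · rintro ⟨a, ha⟩
      rw [gam_muS S h] at ha
      exact ha ▸ gS_not_mem S a
    · intro hx
      rcases (gS_range S x).mpr hx with ⟨a, ha⟩
      exact ⟨a, by rw [gam_muS S h]; exact ha⟩
  constructor
  · intro hx
    by_contra hxS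
    exact h2.mp (hgam.mpr hxS) hx
  · intro hx
    by_contra hh
    exact (hgam.mp (h2.mpr hh)) hx

end Construct

/-! ### From closed sets to tuples -/

lemma dclosed_eq_range {T : Finset ℕ} (h : ∀ j, j + 1 ∈ T → j ∈ T) :
    T = Finset.range T.card := by
  have hdown : ∀ j, j ∈ T → ∀ i, i ≤ j → i ∈ T := by
    intro j
    induction j with
    | zero =>
      intro hj i hi
      have : i = 0 := by omega
      rwa [this]
    | succ j ih =>
      intro hj i hi
      rcases Nat.eq_or_lt_of_le hi with h' | h'
      · rwa [h']
      · exact ih (h j hj) i (by omega)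
  ext x
  simp only [Finset.mem_range]
  constructor
  · intro hx
    have hsub : Finset.range (x + 1) ⊆ T := by
      intro i hi
      exact hdown x hx i (by simpa using Nat.lt_succ_iff.mp (Finset.mem_range.mp hi))
    have := Finset.card_le_card hsub
    simp only [Finset.card_range] at this
    omega
  · intro hx
    by_contra hxT
    have hsub : T ⊆ Finset.range x := by
      intro y hy
      rw [Finset.mem_range]
      by_contra hyx
      exact hxT (hdown y hy x (by omega))
    have := Finset.card_le_card hsub
    simp only [Finset.card_range] at this
    omega

lemma no_mul {ℓ : ℕ} (hℓ : 1 ≤ ℓ) {S : Finset ℕ} (h0 : 0 ∉ S) (hcl : Closed ℓ S) :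
    ∀ x ∈ S, ¬ ℓ ∣ x := by
  intro x
  induction x using Nat.strong_induction_on with
  | _ x ih =>
    intro hx hdvd
    have hx0 : x ≠ 0 := fun h => h0 (h ▸ hx)
    have hlx : ℓ ≤ x := Nat.le_of_dvd (Nat.pos_of_ne_zero hx0) hdvd
    exact ih (x - ℓ) (by omega) (hcl x hx hlx) (Nat.dvd_sub hdvd dvd_rfl)

/-- The tuple of residue-class counts. -/
def psi (ℓ : ℕ) (S : Finset ℕ) (r : Fin (ℓ - 1)) : ℕ :=
  (S.filter fun x => x % ℓ = (r : ℕ) + 1).card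

lemma mod_mem {ℓ : ℕ} (hℓ : 2 ≤ ℓ) {S : Finset ℕ} (h0 : 0 ∉ S) (hcl : Closed ℓ S)
    {x : ℕ} (hx : x ∈ S) : x % ℓ ≠ 0 ∧ x % ℓ < ℓ := by
  constructor
  · intro h
    exact no_mul (by omega) h0 hcl x hx (Nat.dvd_of_mod_eq_zero h)
  · exact Nat.mod_lt x (by omega)

lemma sum_psi {ℓ : ℕ} (hℓ : 2 ≤ ℓ) {S : Finset ℕ} (h0 : 0 ∉ S) (hcl : Closed ℓ S) :
    ∑ r : Fin (ℓ - 1), psi ℓ S r = S.card := by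
  classical
  have hcard := Finset.card_eq_sum_card_fiberwise
    (f := fun x => x % ℓ) (s := S) (t := Finset.univ.image fun r : Fin (ℓ - 1) => (r : ℕ) + 1)
    (by
      intro x hx
      have hm := mod_mem hℓ h0 hcl hx
      exact Finset.mem_image.mpr ⟨⟨x % ℓ - 1, by omega⟩, Finset.mem_univ _, by simp; omega⟩)
  rw [hcard, Finset.sum_image]
  · rfl
  · intro r _ r' _ h
    simp only at h
    exact Fin.ext (by omega)

lemma fiber_eq {ℓ : ℕ} (hℓ : 2 ≤ ℓ) {S : Finset ℕ} (hcl : Closed ℓ S) (r : Fin (ℓ - 1)) :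
    S.filter (fun x => x % ℓ = (r : ℕ) + 1)
      = (Finset.range (psi ℓ S r)).image fun j => ((r : ℕ) + 1) + ℓ * j := by
  classical
  set q := (r : ℕ) + 1 with hq
  have hqℓ : q < ℓ := by have := r.isLt; omega
  have hdiv : ∀ j : ℕ, (q + ℓ * j) / ℓ = j := by
    intro j
    rw [Nat.add_mul_div_left _ _ (by omega : 0 < ℓ), Nat.div_eq_of_lt hqℓ]
    omega
  have hmod : ∀ j : ℕ, (q + ℓ * j) % ℓ = q := by
    intro j
    rw [Nat.add_mul_mod_self_left, Nat.mod_eq_of_lt hqℓ]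
  set T := (S.filter (fun x => x % ℓ = q)).image (· / ℓ) with hT
  have hmemT : ∀ j, j ∈ T ↔ q + ℓ * j ∈ S := by
    intro j
    rw [hT]
    simp only [Finset.mem_image, Finset.mem_filter]
    constructor
    · rintro ⟨x, ⟨hxS, hxq⟩, hxj⟩
      have : x = q + ℓ * j := by
        have := Nat.div_add_mod x ℓ
        rw [hxq, hxj] at this
        omega
      rwa [← this]
    · intro hj
      exact ⟨q + ℓ * j, ⟨hj, hmod j⟩, hdiv j⟩
  have hTd : ∀ j, j + 1 ∈ T → j ∈ T := by
    intro j hj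
    rw [hmemT] at hj ⊢
    have h1 : ℓ ≤ q + ℓ * (j + 1) := by
      rw [Nat.mul_succ]; omega
    have h2 := hcl _ hj h1
    have h3 : q + ℓ * (j + 1) - ℓ = q + ℓ * j := by
      rw [Nat.mul_succ]; omega
    rwa [h3] at h2
  have hinj : Set.InjOn (· / ℓ) (S.filter (fun x => x % ℓ = q)) := by
    intro x hx y hy hxy
    simp only [Finset.coe_filter, Set.mem_setOf_eq] at hx hy
    have hx' := Nat.div_add_mod x ℓ
    have hy' := Nat.div_add_mod y ℓ
    rw [hx.2] at hx'
    rw [hy.2] at hy'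
    have hxy' : x / ℓ = y / ℓ := hxy
    rw [hxy'] at hx'
    omega
  have hTcard : T.card = psi ℓ S r := by
    rw [hT, Finset.card_image_of_injOn hinj]
    rfl
  have hTrange : T = Finset.range (psi ℓ S r) := by
    rw [← hTcard]
    exact dclosed_eq_range hTd
  ext x
  simp only [Finset.mem_filter, Finset.mem_image, Finset.mem_range]
  constructor
  · rintro ⟨hxS, hxq⟩
    refine ⟨x / ℓ, ?_, ?_⟩
    · rw [← Finset.mem_range, ← hTrange, hmemT]
      have := Nat.div_add_mod x ℓ
      rw [hxq] at this
      have hx' : q + ℓ * (x / ℓ) = x := by omega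
      rwa [hx']
    · have := Nat.div_add_mod x ℓ
      rw [hxq] at this
      omega
  · rintro ⟨j, hj, rfl⟩
    rw [← Finset.mem_range, ← hTrange, hmemT] at hj
    exact ⟨hj, hmod j⟩

lemma mem_closed_iff {ℓ : ℕ} (hℓ : 2 ≤ ℓ) {S : Finset ℕ} (h0 : 0 ∉ S) (hcl : Closed ℓ S)
    (x : ℕ) : x ∈ S ↔ ∃ r : Fin (ℓ - 1), x ∈ S.filter (fun y => y % ℓ = (r : ℕ) + 1) := by
  constructor
  · intro hx
    have hm := mod_mem hℓ h0 hcl hx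
    refine ⟨⟨x % ℓ - 1, by omega⟩, ?_⟩
    simp only [Finset.mem_filter]
    refine ⟨hx, ?_⟩
    show x % ℓ = x % ℓ - 1 + 1
    omega
  · rintro ⟨r, hr⟩
    exact (Finset.mem_filter.mp hr).1

/-- The set built back from a tuple. -/
def setOfTuple (ℓ : ℕ) (P : Fin (ℓ - 1) → ℕ) : Finset ℕ :=
  Finset.univ.biUnion fun r : Fin (ℓ - 1) =>
    (Finset.range (P r)).image fun j => ((r : ℕ) + 1) + ℓ * j

lemma mem_setOfTuple {ℓ : ℕ} {P : Fin (ℓ - 1) → ℕ} {x : ℕ} :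
    x ∈ setOfTuple ℓ P ↔ ∃ r : Fin (ℓ - 1), ∃ j < P r, x = ((r : ℕ) + 1) + ℓ * j := by
  unfold setOfTuple
  simp only [Finset.mem_biUnion, Finset.mem_univ, true_and, Finset.mem_image, Finset.mem_range]
  constructor
  · rintro ⟨r, j, hj, rfl⟩; exact ⟨r, j, hj, rfl⟩
  · rintro ⟨r, j, hj, rfl⟩; exact ⟨r, j, hj, rfl⟩

lemma setOfTuple_zero {ℓ : ℕ} (P : Fin (ℓ - 1) → ℕ) : 0 ∉ setOfTuple ℓ P := by
  rw [mem_setOfTuple]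
  rintro ⟨r, j, hj, h⟩
  omega

lemma setOfTuple_closed {ℓ : ℕ} (hℓ : 2 ≤ ℓ) (P : Fin (ℓ - 1) → ℕ) :
    Closed ℓ (setOfTuple ℓ P) := by
  intro x hx hlx
  rw [mem_setOfTuple] at hx ⊢
  rcases hx with ⟨r, j, hj, rfl⟩
  have hr := r.isLt
  rcases j with _ | j'
  · simp at hlx; omega
  · refine ⟨r, j', by omega, ?_⟩
    rw [Nat.mul_succ]
    omega

lemma filter_setOfTuple {ℓ : ℕ} (hℓ : 2 ≤ ℓ) (P : Fin (ℓ - 1) → ℕ) (r : Fin (ℓ - 1)) :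
    (setOfTuple ℓ P).filter (fun x => x % ℓ = (r : ℕ) + 1)
      = (Finset.range (P r)).image fun j => ((r : ℕ) + 1) + ℓ * j := by
  classical
  have hmod : ∀ (s : Fin (ℓ - 1)) (j : ℕ), (((s : ℕ) + 1) + ℓ * j) % ℓ = (s : ℕ) + 1 := by
    intro s j
    rw [Nat.add_mul_mod_self_left, Nat.mod_eq_of_lt (by have := s.isLt; omega)]
  ext x
  simp only [Finset.mem_filter, mem_setOfTuple, Finset.mem_image, Finset.mem_range]
  constructor
  · rintro ⟨⟨s, j, hj, rfl⟩, hmodx⟩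
    rw [hmod s j] at hmodx
    have hs : s = r := Fin.ext (by omega)
    exact ⟨j, hs ▸ hj, by rw [hs]⟩
  · rintro ⟨j, hj, rfl⟩
    exact ⟨⟨r, j, hj, rfl⟩, hmod r j⟩

lemma psi_setOfTuple {ℓ : ℕ} (hℓ : 2 ≤ ℓ) (P : Fin (ℓ - 1) → ℕ) :
    psi ℓ (setOfTuple ℓ P) = P := by
  funext r
  unfold psi
  rw [filter_setOfTuple hℓ P r]
  rw [Finset.card_image_of_injOn, Finset.card_range]
  intro x _ y _ hxy
  have hxy' : (r : ℕ) + 1 + ℓ * x = (r : ℕ) + 1 + ℓ * y := hxy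
  have : ℓ * x = ℓ * y := by omega
  exact Nat.eq_of_mul_eq_mul_left (by omega) this

lemma psi_injective {ℓ : ℕ} (hℓ : 2 ≤ ℓ) {S₁ S₂ : Finset ℕ}
    (h01 : 0 ∉ S₁) (hcl1 : Closed ℓ S₁) (h02 : 0 ∉ S₂) (hcl2 : Closed ℓ S₂)
    (h : psi ℓ S₁ = psi ℓ S₂) : S₁ = S₂ := by
  ext x
  rw [mem_closed_iff hℓ h01 hcl1, mem_closed_iff hℓ h02 hcl2]
  constructor
  · rintro ⟨r, hr⟩
    refine ⟨r, ?_⟩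
    rw [fiber_eq hℓ hcl2 r, ← h, ← fiber_eq hℓ hcl1 r]
    exact hr
  · rintro ⟨r, hr⟩
    refine ⟨r, ?_⟩
    rw [fiber_eq hℓ hcl1 r, h, ← fiber_eq hℓ hcl2 r]
    exact hr

/-! ### Counting -/

lemma card_set_eq_tuple (ℓ k : ℕ) (hℓ : 2 ≤ ℓ) :
    Nat.card {S : Finset ℕ // 0 ∉ S ∧ Closed ℓ S ∧ S.card = k}
      = Nat.card {P : Fin (ℓ - 1) → ℕ // ∑ r, P r = k} := by
  apply Nat.card_eq_of_bijective
    (fun Sp => ⟨psi ℓ Sp.1, by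
      rcases Sp with ⟨S, h0, hcl, hk⟩
      simpa [sum_psi hℓ h0 hcl] using hk⟩)
  constructor
  · rintro ⟨S₁, h01, hcl1, hk1⟩ ⟨S₂, h02, hcl2, hk2⟩ h
    apply Subtype.ext
    exact psi_injective hℓ h01 hcl1 h02 hcl2 (congrArg Subtype.val h)
  · rintro ⟨P, hP⟩
    refine ⟨⟨setOfTuple ℓ P, setOfTuple_zero P, setOfTuple_closed hℓ P, ?_⟩, ?_⟩
    · rw [← sum_psi hℓ (setOfTuple_zero P) (setOfTuple_closed hℓ P),
        psi_setOfTuple hℓ P]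
      exact hP
    · apply Subtype.ext
      exact psi_setOfTuple hℓ P

lemma card_core_eq_set (ℓ k : ℕ) (hℓ : 2 ≤ ℓ) :
    Nat.card {μ : YoungDiagram // IsCore ℓ μ ∧ μ.rowLen 0 = k}
      = Nat.card {S : Finset ℕ // 0 ∉ S ∧ Closed ℓ S ∧ S.card = k} := by
  apply Nat.card_eq_of_bijective
    (fun μp => ⟨hset μp.1, zero_not_mem_hset _,
      (isCore_iff_closed (by omega) _).mp μp.2.1, by rw [card_hset]; exact μp.2.2⟩)
  constructor
  · rintro ⟨μ, hμ⟩ ⟨ν, hν⟩ h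
    apply Subtype.ext
    exact hset_injective (congrArg Subtype.val h)
  · rintro ⟨S, h0S, hclS, hkS⟩
    refine ⟨⟨muS S, ?_, ?_⟩, ?_⟩
    · rw [isCore_iff_closed (by omega : 1 ≤ ℓ), hset_muS S h0S]
      exact hclS
    · rw [rowLen_muS, rS_zero S h0S]
      exact hkS
    · apply Subtype.ext
      exact hset_muS S h0S

lemma card_tuple (n k : ℕ) :
    Nat.card {P : Fin n → ℕ // ∑ r, P r = k} = (n + k - 1).choose k := by
  classical
  rw [← Nat.card_congr (Sym.equivNatSumOfFintype (Fin n) k)]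
  rw [Nat.card_eq_fintype_card, Sym.card_sym_eq_choose]
  rw [Fintype.card_fin]

lemma count_core (ℓ k : ℕ) (hℓ : 2 ≤ ℓ) :
    Nat.card {μ : YoungDiagram // IsCore ℓ μ ∧ μ.rowLen 0 = k}
      = (ℓ - 1 - 1 + k).choose (ℓ - 1 - 1) := by
  rw [card_core_eq_set ℓ k hℓ, card_set_eq_tuple ℓ k hℓ, card_tuple]
  have h1 : ℓ - 1 + k - 1 = ℓ - 1 - 1 + k := by omega
  rw [h1]
  have h2 := Nat.choose_symm (n := ℓ - 1 - 1 + k) (k := k) (by omega)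
  have h3 : ℓ - 1 - 1 + k - k = ℓ - 1 - 1 := by omega
  rw [h3] at h2
  exact h2.symm

end CoreProof

/-- The generating function counting `ℓ`-cores by their largest part satisfies
`∑_{λ an ℓ-core} x^{λ₁} = 1/(1-x)^{ℓ-1}` as formal power series over `ℤ`,
i.e. `(1 - X)^(ℓ-1)` times the series whose `k`-th coefficient is the number of
`ℓ`-cores with largest part `k` equals `1`. -/
theorem stmt_2 (ℓ : ℕ) (hℓ : 2 ≤ ℓ) :
    (1 - PowerSeries.X : PowerSeries ℤ) ^ (ℓ - 1) *
      PowerSeries.mk (fun k =>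
        (Nat.card {μ : YoungDiagram // IsCore ℓ μ ∧ μ.rowLen 0 = k} : ℤ)) = 1 := by
  have hmk : (PowerSeries.mk (fun k =>
      (Nat.card {μ : YoungDiagram // IsCore ℓ μ ∧ μ.rowLen 0 = k} : ℤ)) : PowerSeries ℤ)
      = (PowerSeries.invOneSubPow ℤ (ℓ - 1)).val := by
    rw [PowerSeries.invOneSubPow_val_eq_mk_sub_one_add_choose_of_pos ℤ (ℓ - 1)
      (by omega : 0 < ℓ - 1)]
    ext n
    rw [PowerSeries.coeff_mk, PowerSeries.coeff_mk, CoreProof.count_core ℓ n hℓ]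
  rw [hmk, ← PowerSeries.invOneSubPow_inv_eq_one_sub_pow]
  exact (PowerSeries.invOneSubPow ℤ (ℓ - 1)).inv_val
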